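/- In the three-machine schedule produced by the RS aggregation algorithm, if the critical jobs satisfy u = v (a single critical job J_u) and p_{1u} ≥ p_{3u}, then C_max ≤ sum_{j∈J} p_{1j} + p_{1u} + p_{2u} + p_{3u}. -/
import Mathlib


open Finset

/-- In the three-machine RS schedule (jobs indexed in schedule
order), if there is a single critical job `u` (i.e. `u = v`) and
`p₁ u ≥ p₃ u`, then `Cmax ≤ ∑ j, p₁ j + p₁ u + p₂ u + p₃ u`. -/
theorem rs_single_critical_job_bound
    (n : ℕ) (p1 p2 p3 : Fin n → ℝ)
    (hp1 : ∀ j, 0 ≤ p1 j) (hp2 : ∀ j, 0 ≤ p2 j) (hp3 : ∀ j, 0 ≤ p3 j)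
    -- Johnson order of the artificial two-machine problem
    -- (`a_j = p₁ j + p₂ j`, `b_j = p₂ j + p₃ j`): every job scheduled after a
    -- job with `a ≥ b` (i.e. `p₁ ≥ p₃`) also satisfies `p₁ ≥ p₃`
    (hJ : ∀ k l : Fin n, k < l → p3 k ≤ p1 k → p3 l ≤ p1 l)
    (u : Fin n) (hu : p3 u ≤ p1 u) (Cmax : ℝ)
    -- `u` is the single critical job of the RS schedule
    (hC : Cmax = (∑ j ∈ Finset.univ.filter (fun j => j ≤ u), p1 j) + p2 u +
                 (∑ j ∈ Finset.univ.filter (fun j => u ≤ j), p3 j)) :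
    Cmax ≤ (∑ j, p1 j) + (p1 u + p2 u + p3 u) := by
  have hsplit3 : (∑ j ∈ Finset.univ.filter (fun j => u ≤ j), p3 j)
      = p3 u + ∑ j ∈ Finset.univ.filter (fun j => u < j), p3 j := by
    have : Finset.univ.filter (fun j => u ≤ j)
        = insert u (Finset.univ.filter (fun j => u < j)) := by
      ext j
      simp [le_iff_lt_or_eq, eq_comm, or_comm]
    rw [this, Finset.sum_insert (by simp)]
  have h3le : (∑ j ∈ Finset.univ.filter (fun j => u < j), p3 j)
      ≤ ∑ j ∈ Finset.univ.filter (fun j => u < j), p1 j := by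
    apply Finset.sum_le_sum
    intro j hj
    simp only [Finset.mem_filter] at hj
    exact hJ u j hj.2 hu
  have hsplit1 : (∑ j, p1 j)
      = (∑ j ∈ Finset.univ.filter (fun j => j ≤ u), p1 j)
        + ∑ j ∈ Finset.univ.filter (fun j => u < j), p1 j := by
    rw [← Finset.sum_filter_add_sum_filter_not Finset.univ (fun j => j ≤ u) p1]
    congr 1
    apply Finset.sum_congr _ (fun _ _ => rfl)
    ext j; simp [not_le]
  have := hp1 u
  rw [hC, hsplit3, hsplit1]
  linarith
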